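/- In the unitary product-state setup, for every natural number α ≥ 2, the function t ↦ trace((ρ_A(t))^α) is twice differentiable at t = 0 and its second derivative at t = 0 equals −2α · Σ_{n,m∈N} Cov_A(n,m) · Cov_B(n,m). (Equivalently, the Rényi entropy S_α = (1/(1−α))·log trace ρ_A^α satisfies d²S_α/dt²|_{t=0} = (2α/(α−1)) · Σ_{n,m} Cov_A(n,m)·Cov_B(n,m), so all Rényi entropies grow at leading order with the same universal timescale.) -/

import Mathlib

open Matrix
open scoped Kronecker Matrix

/-- Partial trace over the second tensor factor. -/
noncomputable def ptraceB {ιA ιB : Type*} [Fintype ιA] [Fintype ιB]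
    (ρ : Matrix (ιA × ιB) (ιA × ιB) ℂ) : Matrix ιA ιA ℂ :=
  Matrix.of fun a a' => ∑ b, ρ (a, b) (a', b)

/-- The expectation value `⟨M⟩_ψ = ψᴴ · M · ψ` of a matrix in a vector state. -/
noncomputable def expval {ι : Type*} [Fintype ι] (ψ : ι → ℂ) (M : Matrix ι ι ℂ) : ℂ :=
  star ψ ⬝ᵥ (M *ᵥ ψ)

namespace RenyiAux

/-- partial trace as a linear map -/
noncomputable def ptraceL {ιA ιB : Type*} [Fintype ιA] [Fintype ιB] :
    Matrix (ιA × ιB) (ιA × ιB) ℂ →ₗ[ℂ] Matrix ιA ιA ℂ where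
  toFun := ptraceB
  map_add' X Y := by
    ext a a'; simp [ptraceB, Finset.sum_add_distrib]
  map_smul' z X := by
    ext a a'; simp [ptraceB, Finset.mul_sum]

theorem ptraceL_apply {ιA ιB : Type*} [Fintype ιA] [Fintype ιB]
    (X : Matrix (ιA × ιB) (ιA × ιB) ℂ) : ptraceL X = ptraceB X := rfl

theorem ptraceB_kron {ιA ιB : Type*} [Fintype ιA] [Fintype ιB]
    (C : Matrix ιA ιA ℂ) (D : Matrix ιB ιB ℂ) :
    ptraceB (C ⊗ₖ D) = D.trace • C := by
  ext a a'
  simp only [ptraceB, Matrix.of_apply, Matrix.kroneckerMap_apply, Matrix.trace, Matrix.diag,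
    Matrix.smul_apply, smul_eq_mul]
  rw [Finset.sum_mul]
  exact Finset.sum_congr rfl fun b _ => by ring

theorem trace_mul_vmv {ι : Type*} [Fintype ι] (ψ : ι → ℂ) (X : Matrix ι ι ℂ) :
    (X * Matrix.vecMulVec ψ (star ψ)).trace = expval ψ X := by
  simp only [Matrix.trace, Matrix.diag, Matrix.mul_apply, Matrix.vecMulVec_apply,
    expval, dotProduct, Matrix.mulVec, Pi.star_apply]
  exact Finset.sum_congr rfl fun a _ => by
    rw [Finset.mul_sum]
    exact Finset.sum_congr rfl fun b _ => by ring

theorem trace_vmv_mul {ι : Type*} [Fintype ι] (ψ : ι → ℂ) (X : Matrix ι ι ℂ) :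
    (Matrix.vecMulVec ψ (star ψ) * X).trace = expval ψ X := by
  rw [Matrix.trace_mul_comm, trace_mul_vmv]

theorem vmv_mul_vmv {ι : Type*} [Fintype ι] (ψ : ι → ℂ) (X : Matrix ι ι ℂ) :
    Matrix.vecMulVec ψ (star ψ) * X * Matrix.vecMulVec ψ (star ψ)
      = expval ψ X • Matrix.vecMulVec ψ (star ψ) := by
  ext a a'
  simp only [Matrix.mul_apply, Matrix.vecMulVec_apply, Matrix.smul_apply, expval, dotProduct,
    Matrix.mulVec, Pi.star_apply, smul_eq_mul, Finset.sum_mul, Finset.mul_sum]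
  rw [Finset.sum_comm]
  refine Finset.sum_congr rfl fun b _ => Finset.sum_congr rfl fun c _ => by ring

theorem expval_one {ι : Type*} [Fintype ι] [DecidableEq ι] {ψ : ι → ℂ} (hψ : star ψ ⬝ᵥ ψ = 1) :
    expval ψ (1 : Matrix ι ι ℂ) = 1 := by
  simp only [expval, Matrix.one_mulVec]; exact hψ

theorem vmv_sq {ι : Type*} [Fintype ι] [DecidableEq ι] {ψ : ι → ℂ} (hψ : star ψ ⬝ᵥ ψ = 1) :
    Matrix.vecMulVec ψ (star ψ) * Matrix.vecMulVec ψ (star ψ)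
      = Matrix.vecMulVec ψ (star ψ) := by
  have := vmv_mul_vmv ψ (1 : Matrix ι ι ℂ)
  rw [mul_one, expval_one hψ, one_smul] at this
  exact this

theorem trace_vmv {ι : Type*} [Fintype ι] [DecidableEq ι] {ψ : ι → ℂ} (hψ : star ψ ⬝ᵥ ψ = 1) :
    (Matrix.vecMulVec ψ (star ψ)).trace = 1 := by
  have := trace_mul_vmv ψ (1 : Matrix ι ι ℂ)
  rw [one_mul, expval_one hψ] at this
  exact this

theorem ptraceB_smul {ιA ιB : Type*} [Fintype ιA] [Fintype ιB] (z : ℂ)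
    (X : Matrix (ιA × ιB) (ιA × ιB) ℂ) : ptraceB (z • X) = z • ptraceB X :=
  ptraceL.map_smul z X

theorem ptraceB_add {ιA ιB : Type*} [Fintype ιA] [Fintype ιB]
    (X Y : Matrix (ιA × ιB) (ιA × ιB) ℂ) : ptraceB (X + Y) = ptraceB X + ptraceB Y :=
  ptraceL.map_add X Y

theorem ptraceB_sum {ιA ιB κ : Type*} [Fintype ιA] [Fintype ιB] (s : Finset κ)
    (f : κ → Matrix (ιA × ιB) (ιA × ιB) ℂ) :
    ptraceB (∑ i ∈ s, f i) = ∑ i ∈ s, ptraceB (f i) :=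
  map_sum ptraceL f s

/-- linear map composition with HasDerivAt -/
theorem LM.comp_hasDerivAt {E F : Type*} [NormedAddCommGroup E] [NormedSpace ℝ E]
    [NormedAddCommGroup F] [NormedSpace ℝ F] [FiniteDimensional ℝ E]
    (L : E →ₗ[ℝ] F) {G : ℝ → E} {G' : E} {t : ℝ} (h : HasDerivAt G G' t) :
    HasDerivAt (fun s => L (G s)) (L G') t := by
  have := (LinearMap.toContinuousLinearMap L).hasFDerivAt
    (x := G t) |>.comp_hasDerivAt t h
  simpa [Function.comp_def] using this

/-- derivative of a power of a matrix-valued function -/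
theorem hasDerivAt_pow_fun {𝔸 : Type*} [NormedRing 𝔸] [NormedAlgebra ℝ 𝔸] (k : ℕ)
    {F : ℝ → 𝔸} {F' : 𝔸} {t : ℝ} (h : HasDerivAt F F' t) :
    HasDerivAt (fun s => F s ^ k)
      (∑ i ∈ Finset.range k, F t ^ i * F' * F t ^ (k - 1 - i)) t := by
  induction k with
  | zero => simpa using hasDerivAt_const t (1 : 𝔸)
  | succ k ih =>
    have h2 := ih.mul h
    have hfun : (fun s => F s ^ (k + 1)) = fun s => F s ^ k * F s := by
      funext s; rw [pow_succ]
    rw [hfun]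
    convert h2 using 1
    · funext s; rfl
    rw [Finset.sum_range_succ]
    have hlast : k + 1 - 1 - k = 0 := by omega
    rw [hlast, pow_zero, mul_one]
    congr 1
    rw [Finset.sum_mul]
    refine Finset.sum_congr rfl fun i hi => ?_
    rw [Finset.mem_range] at hi
    have he : k + 1 - 1 - i = (k - 1 - i) + 1 := by omega
    rw [he, pow_succ, ← mul_assoc]

/-- real-parameter derivative of matrix exponential over ℂ -/
theorem hasDerivAt_exp_real {𝔸 : Type*} [NormedRing 𝔸] [NormedAlgebra ℝ 𝔸]
    [Algebra ℂ 𝔸] [CompleteSpace 𝔸] (M : 𝔸) (t : ℝ) :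
    HasDerivAt (fun s : ℝ => NormedSpace.exp (s • M)) (NormedSpace.exp (t • M) * M) t := by
  have := hasDerivAt_exp_smul_const (𝕂 := ℝ) M t
  exact this


section Words

variable {ι : Type*} [Fintype ι] [DecidableEq ι] {ψ : ι → ℂ} (hψ : star ψ ⬝ᵥ ψ = 1)

local notation "Pr" => Matrix.vecMulVec ψ (star ψ)

set_option linter.unusedSectionVars false

include hψ

theorem vmv_pow (k : ℕ) : (Pr : Matrix ι ι ℂ) ^ (k + 1) = Pr := by
  induction k with
  | zero => rw [pow_one]
  | succ k ih => rw [pow_succ, ih, vmv_sq hψ]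

theorem trace_vmv_conj (X : Matrix ι ι ℂ) :
    (Pr * X * Pr).trace = expval ψ X := by
  rw [vmv_mul_vmv, Matrix.trace_smul, trace_vmv hψ, smul_eq_mul, mul_one]

theorem wordA1 (X Y : Matrix ι ι ℂ) :
    (Pr * (X * (Y * Pr))).trace = expval ψ (X * Y) := by
  have h : Pr * (X * (Y * Pr)) = Pr * (X * Y) * Pr := by noncomm_ring
  rw [h, vmv_mul_vmv, Matrix.trace_smul, trace_vmv hψ, smul_eq_mul, mul_one]

theorem wordA2 (X Y : Matrix ι ι ℂ) :
    (Pr * ((X * Pr) * Y)).trace = expval ψ X * expval ψ Y := by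
  have h : Pr * ((X * Pr) * Y) = (Pr * X * Pr) * Y := by noncomm_ring
  rw [h, vmv_mul_vmv, Matrix.smul_mul, Matrix.trace_smul, trace_vmv_mul, smul_eq_mul]

theorem wordA3 (X Y : Matrix ι ι ℂ) :
    (Pr * (X * (Pr * Y))).trace = expval ψ X * expval ψ Y := by
  have h : Pr * (X * (Pr * Y)) = (Pr * X * Pr) * Y := by noncomm_ring
  rw [h, vmv_mul_vmv, Matrix.smul_mul, Matrix.trace_smul, trace_vmv_mul, smul_eq_mul]

theorem wordA4 (X Y : Matrix ι ι ℂ) :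
    ((Pr : Matrix ι ι ℂ) * ((Pr * X) * Y)).trace = expval ψ (X * Y) := by
  have h : Pr * ((Pr * X) * Y) = (Pr * Pr) * (X * Y) := by noncomm_ring
  rw [h, vmv_sq hψ, trace_vmv_mul]

theorem wordB1 (X Y : Matrix ι ι ℂ) :
    (X * (Y * Pr)).trace = expval ψ (X * Y) := by
  rw [← mul_assoc, trace_mul_vmv]

theorem wordB2 (X Y : Matrix ι ι ℂ) :
    ((X * Pr) * Y).trace = expval ψ (Y * X) := by
  rw [Matrix.trace_mul_comm, ← mul_assoc, trace_mul_vmv]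

theorem wordB3 (X Y : Matrix ι ι ℂ) :
    (X * (Pr * Y)).trace = expval ψ (Y * X) := by
  rw [← mul_assoc, Matrix.trace_mul_comm, ← mul_assoc, trace_mul_vmv]

theorem wordB4 (X Y : Matrix ι ι ℂ) :
    ((Pr * X) * Y).trace = expval ψ (X * Y) := by
  rw [mul_assoc, trace_vmv_mul]

/-- the central covariance computation -/
theorem wordPCC (X Y : Matrix ι ι ℂ) :
    (Pr * ((X * Pr - Pr * X) * (Y * Pr - Pr * Y))).trace
      = expval ψ X * expval ψ Y - expval ψ (X * Y) := by
  have h : Pr * ((X * Pr - Pr * X) * (Y * Pr - Pr * Y))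
      = (Pr * X * Pr) * (Y * Pr) - (Pr * X * Pr) * (Pr * Y)
        - ((Pr * Pr) * (X * Y)) * Pr + ((Pr * Pr) * X) * (Pr * Y) := by
    noncomm_ring
  rw [h, vmv_sq hψ]
  rw [Matrix.trace_add, Matrix.trace_sub, Matrix.trace_sub]
  rw [vmv_mul_vmv ψ X, Matrix.smul_mul, Matrix.smul_mul, Matrix.trace_smul, Matrix.trace_smul]
  rw [← mul_assoc Pr Y Pr, trace_vmv_conj hψ]
  rw [← mul_assoc Pr Pr Y, vmv_sq hψ, trace_vmv_mul]
  rw [trace_vmv_conj hψ]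
  rw [mul_assoc Pr X (Pr * Y), wordA3 hψ]
  simp only [smul_eq_mul]
  ring

theorem structC1 (X : Matrix ι ι ℂ) :
    Pr * (X * Pr - Pr * X) * Pr = 0 := by
  have h : Pr * (X * Pr - Pr * X) * Pr
      = Pr * X * (Pr * Pr) - (Pr * Pr) * X * Pr := by noncomm_ring
  rw [h, vmv_sq hψ, sub_self]

theorem structC2 (X : Matrix ι ι ℂ) :
    X * Pr - Pr * X = Pr * (X * Pr - Pr * X) + (X * Pr - Pr * X) * Pr := by
  have h : Pr * (X * Pr - Pr * X) + (X * Pr - Pr * X) * Pr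
      = Pr * X * Pr - (Pr * Pr) * X + X * (Pr * Pr) - Pr * X * Pr := by noncomm_ring
  rw [h, vmv_sq hψ]
  abel

theorem keyJK {c : Matrix ι ι ℂ} (h1 : Pr * c * Pr = 0) (h2 : c = Pr * c + c * Pr)
    (j k : ℕ) :
    ((Pr : Matrix ι ι ℂ) ^ j * c * Pr ^ k * c).trace
      = (if j = 0 then (Pr * (c * c)).trace else 0)
        + (if k = 0 then (Pr * (c * c)).trace else 0) := by
  have hPcc : (c * Pr * c).trace = (Pr * (c * c)).trace := by
    rw [Matrix.trace_mul_comm, ← mul_assoc, Matrix.trace_mul_comm]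
  match j, k with
  | 0, 0 =>
    simp only [pow_zero, one_mul, mul_one, if_pos rfl]
    nth_rewrite 1 [h2]
    rw [add_mul, Matrix.trace_add, mul_assoc, hPcc]
    simp
  | 0, k + 1 =>
    rw [pow_zero, one_mul, vmv_pow hψ, if_pos rfl, if_neg (Nat.succ_ne_zero k), add_zero, hPcc]
  | j + 1, 0 =>
    rw [pow_zero, mul_one, vmv_pow hψ, if_pos rfl, if_neg (Nat.succ_ne_zero j), zero_add,
      mul_assoc]
  | j + 1, k + 1 =>
    rw [vmv_pow hψ, vmv_pow hψ, if_neg (Nat.succ_ne_zero j), if_neg (Nat.succ_ne_zero k),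
      add_zero, h1, Matrix.zero_mul, Matrix.trace_zero]

end Words

end RenyiAux


/-- **Universal second-order growth of Rényi traces.**
In the unitary product-state setup, for every natural `α ≥ 2` the function
`f t = trace ((ρ_A t) ^ α)` is twice differentiable at `t = 0` and its second derivative
there is `−2α · Σ_{n,m} Cov_A(n,m) · Cov_B(n,m)`, so all Rényi entropies grow at
leading order with the same universal timescale. -/
theorem renyi_trace_second_deriv {ιA ιB : Type*}
    [Fintype ιA] [DecidableEq ιA] [Nonempty ιA]
    [Fintype ιB] [DecidableEq ιB] [Nonempty ιB]
    (ψA : ιA → ℂ) (ψB : ιB → ℂ)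
    (hψA : star ψA ⬝ᵥ ψA = 1) (hψB : star ψB ⬝ᵥ ψB = 1)
    {N : Type*} [Fintype N]
    (A : N → Matrix ιA ιA ℂ) (B : N → Matrix ιB ιB ℂ)
    (H : Matrix (ιA × ιB) (ιA × ιB) ℂ)
    (hH : H = ∑ n, (A n) ⊗ₖ (B n))
    (hHerm : H.IsHermitian)
    (ρ₀ : Matrix (ιA × ιB) (ιA × ιB) ℂ)
    (hρ₀ : ρ₀ = (Matrix.vecMulVec ψA (star ψA)) ⊗ₖ (Matrix.vecMulVec ψB (star ψB)))
    (ρ : ℝ → Matrix (ιA × ιB) (ιA × ιB) ℂ)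
    (hρ : ∀ t : ℝ, ρ t =
      NormedSpace.exp ((-(t : ℂ) * Complex.I) • H) * ρ₀ *
        NormedSpace.exp (((t : ℂ) * Complex.I) • H))
    (α : ℕ) (hα : 2 ≤ α) :
    (∀ t : ℝ, DifferentiableAt ℝ (fun t : ℝ => (ptraceB (ρ t) ^ α).trace) t) ∧
      HasDerivAt (deriv (fun t : ℝ => (ptraceB (ρ t) ^ α).trace))
        (-2 * (α : ℂ) *
          ∑ n, ∑ m,
            (expval ψA (A n * A m) - expval ψA (A n) * expval ψA (A m)) *
              (expval ψB (B n * B m) - expval ψB (B n) * expval ψB (B m))) 0 := by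
  classical
  obtain ⟨γ, rfl⟩ : ∃ γ, α = γ + 2 := ⟨α - 2, by omega⟩
  clear hα
  letI : NormedRing (Matrix (ιA × ιB) (ιA × ιB) ℂ) := Matrix.linftyOpNormedRing
  letI : NormedAlgebra ℝ (Matrix (ιA × ιB) (ιA × ιB) ℂ) := Matrix.linftyOpNormedAlgebra
  letI : NormedRing (Matrix ιA ιA ℂ) := Matrix.linftyOpNormedRing
  letI : NormedAlgebra ℝ (Matrix ιA ιA ℂ) := Matrix.linftyOpNormedAlgebra
  letI : CompleteSpace (Matrix (ιA × ιB) (ιA × ιB) ℂ) := FiniteDimensional.complete ℝ _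
  letI : CompleteSpace (Matrix ιA ιA ℂ) := FiniteDimensional.complete ℝ _
  set P : Matrix ιA ιA ℂ := Matrix.vecMulVec ψA (star ψA) with hPdef
  set Q : Matrix ιB ιB ℂ := Matrix.vecMulVec ψB (star ψB) with hQdef
  set M₁ : Matrix (ιA × ιB) (ιA × ιB) ℂ := (-Complex.I) • H with hM₁def
  set M₂ : Matrix (ιA × ιB) (ιA × ιB) ℂ := Complex.I • H with hM₂def
  have hρfun : ρ = fun s : ℝ =>
      NormedSpace.exp (s • M₁) * ρ₀ * NormedSpace.exp (s • M₂) := by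
    funext s
    rw [hρ s]
    have e1 : s • M₁ = (-(s : ℂ) * Complex.I) • H := by
      rw [hM₁def, ← smul_assoc, Complex.real_smul]
      congr 1
      ring
    have e2 : s • M₂ = ((s : ℂ) * Complex.I) • H := by
      rw [hM₂def, ← smul_assoc, Complex.real_smul]
    rw [e1, e2]
  subst hρfun
  set ρf : ℝ → Matrix (ιA × ιB) (ιA × ιB) ℂ := fun s : ℝ =>
      NormedSpace.exp (s • M₁) * ρ₀ * NormedSpace.exp (s • M₂) with hρfdef
  -- derivative of ρf
  have hρd : ∀ t : ℝ, HasDerivAt ρf (M₁ * ρf t + ρf t * M₂) t := by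
    intro t
    have hU := RenyiAux.hasDerivAt_exp_real M₁ t
    have hV := RenyiAux.hasDerivAt_exp_real M₂ t
    have h1 := (hU.mul_const ρ₀).mul hV
    have hUc : NormedSpace.exp (t • M₁) * M₁ = M₁ * NormedSpace.exp (t • M₁) :=
      (((Commute.refl M₁).smul_left t).exp_left).eq
    refine h1.congr_deriv (Eq.symm ?_)
    erw [hUc]
    show M₁ * (NormedSpace.exp (t • M₁) * ρ₀ * NormedSpace.exp (t • M₂))
        + (NormedSpace.exp (t • M₁) * ρ₀ * NormedSpace.exp (t • M₂)) * M₂ = _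
    noncomm_ring
  -- linear maps
  set Dl : Matrix (ιA × ιB) (ιA × ιB) ℂ →ₗ[ℝ] Matrix (ιA × ιB) (ιA × ιB) ℂ :=
    LinearMap.mulLeft ℝ M₁ + LinearMap.mulRight ℝ M₂ with hDldef
  have hDl_apply : ∀ X, Dl X = M₁ * X + X * M₂ := by
    intro X; simp [hDldef, LinearMap.mulLeft_apply, LinearMap.mulRight_apply]
  set Tl : Matrix (ιA × ιB) (ιA × ιB) ℂ →ₗ[ℝ] Matrix ιA ιA ℂ :=
    (RenyiAux.ptraceL).restrictScalars ℝ with hTldef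
  have hTl_apply : ∀ X, Tl X = ptraceB X := fun X => rfl
  have hρd' : ∀ t : ℝ, HasDerivAt ρf (Dl (ρf t)) t := by
    intro t; rw [hDl_apply]; exact hρd t
  have hg : ∀ t : ℝ, HasDerivAt (fun s => ptraceB (ρf s)) (ptraceB (Dl (ρf t))) t := by
    intro t
    have := RenyiAux.LM.comp_hasDerivAt Tl (hρd' t)
    exact this
  have hg1 : ∀ t : ℝ, HasDerivAt (fun s => ptraceB (Dl (ρf s))) (ptraceB (Dl (Dl (ρf t)))) t := by
    intro t
    have := RenyiAux.LM.comp_hasDerivAt (Tl ∘ₗ Dl) (hρd' t)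
    exact this
  -- first derivative of the trace of the power
  have hf : ∀ t : ℝ, HasDerivAt (fun s => (ptraceB (ρf s) ^ (γ + 2)).trace)
      (((γ : ℂ) + 2) * (ptraceB (ρf t) ^ (γ + 1) * ptraceB (Dl (ρf t))).trace) t := by
    intro t
    have hpow := RenyiAux.hasDerivAt_pow_fun (γ + 2) (hg t)
    have htr := RenyiAux.LM.comp_hasDerivAt
      ((Matrix.traceLinearMap ιA ℂ ℂ).restrictScalars ℝ) hpow
    have hval : ((Matrix.traceLinearMap ιA ℂ ℂ).restrictScalars ℝ)
        (∑ i ∈ Finset.range (γ + 2),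
          ptraceB (ρf t) ^ i * ptraceB (Dl (ρf t)) * ptraceB (ρf t) ^ (γ + 2 - 1 - i))
        = ((γ : ℂ) + 2) * (ptraceB (ρf t) ^ (γ + 1) * ptraceB (Dl (ρf t))).trace := by
      show Matrix.trace _ = _
      rw [Matrix.trace_sum]
      have : ∀ i ∈ Finset.range (γ + 2),
          (ptraceB (ρf t) ^ i * ptraceB (Dl (ρf t)) * ptraceB (ρf t) ^ (γ + 2 - 1 - i)).trace
            = (ptraceB (ρf t) ^ (γ + 1) * ptraceB (Dl (ρf t))).trace := by
        intro i hi
        rw [Finset.mem_range] at hi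
        rw [Matrix.trace_mul_comm, ← mul_assoc, ← pow_add]
        have hee : γ + 2 - 1 - i + i = γ + 1 := by omega
        rw [hee]
      rw [Finset.sum_congr rfl this, Finset.sum_const, Finset.card_range, nsmul_eq_mul]
      push_cast
      ring
    rw [hval] at htr
    exact htr
  constructor
  · intro t
    exact (hf t).differentiableAt
  have hde : deriv (fun s => (ptraceB (ρf s) ^ (γ + 2)).trace)
      = fun t => ((γ : ℂ) + 2) * (ptraceB (ρf t) ^ (γ + 1) * ptraceB (Dl (ρf t))).trace :=
    funext fun t => (hf t).deriv
  rw [hde]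
  -- second derivative at 0
  have h1 := RenyiAux.hasDerivAt_pow_fun (γ + 1) (hg 0)
  have h3 := h1.mul (hg1 0)
  have h4 := RenyiAux.LM.comp_hasDerivAt
    ((Matrix.traceLinearMap ιA ℂ ℂ).restrictScalars ℝ) h3
  have h5 := h4.const_mul ((γ : ℂ) + 2)
  refine h5.congr_deriv (Eq.symm ?_)
  -- abbreviations for the word lemmas over `P` and `Q`
  have hPP : P * P = P := by rw [hPdef]; exact RenyiAux.vmv_sq hψA
  have htrP : P.trace = 1 := by rw [hPdef]; exact RenyiAux.trace_vmv hψA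
  have hWA1 : ∀ X Y : Matrix ιA ιA ℂ, (P * (X * (Y * P))).trace = expval ψA (X * Y) := by
    intro X Y; rw [hPdef]; exact RenyiAux.wordA1 hψA X Y
  have hWA2 : ∀ X Y : Matrix ιA ιA ℂ, (P * ((X * P) * Y)).trace
      = expval ψA X * expval ψA Y := by
    intro X Y; rw [hPdef]; exact RenyiAux.wordA2 hψA X Y
  have hWA3 : ∀ X Y : Matrix ιA ιA ℂ, (P * (X * (P * Y))).trace
      = expval ψA X * expval ψA Y := by
    intro X Y; rw [hPdef]; exact RenyiAux.wordA3 hψA X Y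
  have hWA4 : ∀ X Y : Matrix ιA ιA ℂ, (P * ((P * X) * Y)).trace = expval ψA (X * Y) := by
    intro X Y; rw [hPdef]; exact RenyiAux.wordA4 hψA X Y
  have hWB1 : ∀ X Y : Matrix ιB ιB ℂ, (X * (Y * Q)).trace = expval ψB (X * Y) := by
    intro X Y; rw [hQdef]; exact RenyiAux.wordB1 hψB X Y
  have hWB2 : ∀ X Y : Matrix ιB ιB ℂ, ((X * Q) * Y).trace = expval ψB (Y * X) := by
    intro X Y; rw [hQdef]; exact RenyiAux.wordB2 hψB X Y
  have hWB3 : ∀ X Y : Matrix ιB ιB ℂ, (X * (Q * Y)).trace = expval ψB (Y * X) := by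
    intro X Y; rw [hQdef]; exact RenyiAux.wordB3 hψB X Y
  have hWB4 : ∀ X Y : Matrix ιB ιB ℂ, ((Q * X) * Y).trace = expval ψB (X * Y) := by
    intro X Y; rw [hQdef]; exact RenyiAux.wordB4 hψB X Y
  have hBQ : ∀ X : Matrix ιB ιB ℂ, (X * Q).trace = expval ψB X := by
    intro X; rw [hQdef]; exact RenyiAux.trace_mul_vmv ψB X
  have hQB : ∀ X : Matrix ιB ιB ℂ, (Q * X).trace = expval ψB X := by
    intro X; rw [hQdef]; exact RenyiAux.trace_vmv_mul ψB X
  have hPCC : ∀ X Y : Matrix ιA ιA ℂ,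
      (P * ((X * P - P * X) * (Y * P - P * Y))).trace
        = expval ψA X * expval ψA Y - expval ψA (X * Y) := by
    intro X Y; rw [hPdef]; exact RenyiAux.wordPCC hψA X Y
  have hst1 : ∀ X : Matrix ιA ιA ℂ, P * (X * P - P * X) * P = 0 := by
    intro X; rw [hPdef]; exact RenyiAux.structC1 hψA X
  have hst2 : ∀ X : Matrix ιA ιA ℂ,
      X * P - P * X = P * (X * P - P * X) + (X * P - P * X) * P := by
    intro X; rw [hPdef]; exact RenyiAux.structC2 hψA X
  have hPpow : ∀ k : ℕ, P ^ (k + 1) = P := by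
    intro k; rw [hPdef]; exact RenyiAux.vmv_pow hψA k
  -- evaluations at time 0
  have hρf0 : ρf 0 = ρ₀ := by
    show NormedSpace.exp ((0 : ℝ) • M₁) * ρ₀ * NormedSpace.exp ((0 : ℝ) • M₂) = ρ₀
    rw [zero_smul, zero_smul, NormedSpace.exp_zero, one_mul, mul_one]
  have hPρ₀ : ptraceB ρ₀ = P := by
    rw [hρ₀, RenyiAux.ptraceB_kron]
    rw [hQdef, RenyiAux.trace_vmv hψB, one_smul]
  -- the commutator structure of `Dl` on Kronecker products
  have hDK : ∀ (C : Matrix ιA ιA ℂ) (D : Matrix ιB ιB ℂ),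
      Dl (C ⊗ₖ D) = ∑ n, ((-Complex.I) • ((A n * C) ⊗ₖ (B n * D))
        + Complex.I • ((C * A n) ⊗ₖ (D * B n))) := by
    intro C D
    rw [hDl_apply, hM₁def, hM₂def, hH]
    rw [smul_mul_assoc, mul_smul_comm, Finset.sum_mul, Finset.mul_sum]
    rw [Finset.smul_sum, Finset.smul_sum, ← Finset.sum_add_distrib]
    refine Finset.sum_congr rfl fun n _ => ?_
    rw [Matrix.mul_kronecker_mul, Matrix.mul_kronecker_mul]
  have hDlsmul : ∀ (z : ℂ) (X : Matrix (ιA × ιB) (ιA × ιB) ℂ), Dl (z • X) = z • Dl X := by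
    intro z X
    simp only [hDl_apply, mul_smul_comm, smul_mul_assoc, smul_add]
  -- the first commutator
  have hc : ptraceB (Dl ρ₀) = ∑ n, (-Complex.I * expval ψB (B n)) • (A n * P - P * A n) := by
    rw [hρ₀, hDK P Q, RenyiAux.ptraceB_sum]
    refine Finset.sum_congr rfl fun n _ => ?_
    rw [RenyiAux.ptraceB_add, RenyiAux.ptraceB_smul, RenyiAux.ptraceB_smul,
      RenyiAux.ptraceB_kron, RenyiAux.ptraceB_kron, hBQ, hQB]
    module
  have hcP : P * ptraceB (Dl ρ₀) * P = 0 := by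
    rw [hc, Matrix.mul_sum, Matrix.sum_mul]
    refine Finset.sum_eq_zero fun n _ => ?_
    rw [mul_smul_comm, smul_mul_assoc, hst1, smul_zero]
  have hc2 : ptraceB (Dl ρ₀) = P * ptraceB (Dl ρ₀) + ptraceB (Dl ρ₀) * P := by
    nth_rewrite 1 [hc]
    rw [hc, Matrix.mul_sum, Matrix.sum_mul, ← Finset.sum_add_distrib]
    refine Finset.sum_congr rfl fun n _ => ?_
    rw [mul_smul_comm, smul_mul_assoc, ← smul_add]
    congr 1
    exact hst2 (A n)
  -- trace shortcut
  have htrL : ∀ X : Matrix ιA ιA ℂ,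
      ((Matrix.traceLinearMap ιA ℂ ℂ).restrictScalars ℝ) X = X.trace := fun _ => rfl
  rw [htrL, hρf0, hPρ₀, Matrix.trace_add]
  -- the double-commutator trace
  have hKd : (P * ptraceB (Dl (Dl ρ₀))).trace
      = ∑ n, ∑ m,
          (-(expval ψA (A m * A n) * expval ψB (B m * B n))
            + expval ψA (A n) * expval ψA (A m) * expval ψB (B m * B n)
            + expval ψA (A m) * expval ψA (A n) * expval ψB (B n * B m)
            - expval ψA (A n * A m) * expval ψB (B n * B m)) := by
    rw [hρ₀, hDK P Q, map_sum, RenyiAux.ptraceB_sum, Matrix.mul_sum, Matrix.trace_sum]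
    refine Finset.sum_congr rfl fun n _ => ?_
    rw [map_add, hDlsmul, hDlsmul, hDK (A n * P) (B n * Q), hDK (P * A n) (Q * B n)]
    rw [Finset.smul_sum, Finset.smul_sum, ← Finset.sum_add_distrib,
      RenyiAux.ptraceB_sum, Matrix.mul_sum, Matrix.trace_sum]
    refine Finset.sum_congr rfl fun m _ => ?_
    simp only [smul_add, smul_smul, RenyiAux.ptraceB_add, RenyiAux.ptraceB_smul,
      RenyiAux.ptraceB_kron, Matrix.mul_add, mul_smul_comm, Matrix.trace_add,
      Matrix.trace_smul, smul_eq_mul]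
    rw [hWA1, hWA2, hWA3, hWA4, hWB1, hWB2, hWB3, hWB4]
    linear_combination (expval ψB (B m * B n) * expval ψA (A m * A n)
      + expval ψB (B n * B m) * expval ψA (A n * A m)
      - expval ψB (B m * B n) * expval ψA (A n) * expval ψA (A m)
      - expval ψA (A n) * expval ψA (A m) * expval ψB (B n * B m)) * Complex.I_mul_I
  -- the square-commutator trace
  have hK : (P * (ptraceB (Dl ρ₀) * ptraceB (Dl ρ₀))).trace
      = ∑ n, ∑ m, expval ψB (B n) * expval ψB (B m)
          * (expval ψA (A n * A m) - expval ψA (A n) * expval ψA (A m)) := by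
    rw [hc, Finset.sum_mul_sum, Matrix.mul_sum, Matrix.trace_sum]
    refine Finset.sum_congr rfl fun n _ => ?_
    rw [Matrix.mul_sum, Matrix.trace_sum]
    refine Finset.sum_congr rfl fun m _ => ?_
    simp only [smul_mul_assoc, mul_smul_comm, Matrix.trace_smul, smul_eq_mul]
    rw [hPCC]
    linear_combination (expval ψB (B n) * expval ψB (B m)
      * (expval ψA (A n) * expval ψA (A m) - expval ψA (A n * A m))) * Complex.I_mul_I
  -- the sum over insertion positions collapses to twice the square term
  have hkey : ∀ j k : ℕ, (P ^ j * ptraceB (Dl ρ₀) * P ^ k * ptraceB (Dl ρ₀)).trace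
      = (if j = 0 then (P * (ptraceB (Dl ρ₀) * ptraceB (Dl ρ₀))).trace else 0)
        + (if k = 0 then (P * (ptraceB (Dl ρ₀) * ptraceB (Dl ρ₀))).trace else 0) := by
    intro j k
    simp only [hPdef] at hcP hc2 ⊢
    exact RenyiAux.keyJK hψA hcP hc2 j k
  have hS : ((∑ i ∈ Finset.range (γ + 1),
        P ^ i * ptraceB (Dl ρ₀) * P ^ (γ + 1 - 1 - i)) * ptraceB (Dl ρ₀)).trace
      = 2 * (P * (ptraceB (Dl ρ₀) * ptraceB (Dl ρ₀))).trace := by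
    rw [Finset.sum_mul, Matrix.trace_sum]
    have hterm : ∀ j ∈ Finset.range (γ + 1),
        (P ^ j * ptraceB (Dl ρ₀) * P ^ (γ + 1 - 1 - j) * ptraceB (Dl ρ₀)).trace
          = (if j = 0 then (P * (ptraceB (Dl ρ₀) * ptraceB (Dl ρ₀))).trace else 0)
            + (if j = γ then (P * (ptraceB (Dl ρ₀) * ptraceB (Dl ρ₀))).trace else 0) := by
      intro j hj
      rw [Finset.mem_range] at hj
      rw [hkey j (γ + 1 - 1 - j)]
      congr 1
      by_cases hcase : j = γ
      · subst hcase
        simp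
      · rw [if_neg (show ¬(γ + 1 - 1 - j = 0) by omega), if_neg hcase]
    rw [Finset.sum_congr rfl hterm, Finset.sum_add_distrib,
      Finset.sum_ite_eq' (Finset.range (γ + 1)) (0 : ℕ),
      Finset.sum_ite_eq' (Finset.range (γ + 1)) γ]
    simp only [Finset.mem_range, Nat.lt_succ_iff, Nat.zero_le, Nat.le_refl, if_pos,
      Nat.succ_sub_one, lt_add_iff_pos_left, Nat.lt_add_one, Nat.zero_lt_succ]
    ring
  rw [hS, hPpow γ, hKd, hK]
  -- canonical sums
  set T1 : ℂ := ∑ n, ∑ m, expval ψA (A n * A m) * expval ψB (B n * B m) with hT1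
  set T2 : ℂ := ∑ n, ∑ m, expval ψA (A n * A m) * (expval ψB (B n) * expval ψB (B m)) with hT2
  set T3 : ℂ := ∑ n, ∑ m, expval ψA (A n) * expval ψA (A m) * expval ψB (B n * B m) with hT3
  set T4 : ℂ := ∑ n, ∑ m,
      expval ψA (A n) * expval ψA (A m) * (expval ψB (B n) * expval ψB (B m)) with hT4
  have hq : ∑ n, ∑ m,
      (expval ψA (A n * A m) - expval ψA (A n) * expval ψA (A m)) *
        (expval ψB (B n * B m) - expval ψB (B n) * expval ψB (B m))
      = T1 - T2 - T3 + T4 := by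
    rw [hT1, hT2, hT3, hT4]
    calc ∑ n, ∑ m,
        (expval ψA (A n * A m) - expval ψA (A n) * expval ψA (A m)) *
          (expval ψB (B n * B m) - expval ψB (B n) * expval ψB (B m))
        = ∑ n, ∑ m, (expval ψA (A n * A m) * expval ψB (B n * B m)
            - expval ψA (A n * A m) * (expval ψB (B n) * expval ψB (B m))
            - expval ψA (A n) * expval ψA (A m) * expval ψB (B n * B m)
            + expval ψA (A n) * expval ψA (A m) * (expval ψB (B n) * expval ψB (B m))) := by
          exact Finset.sum_congr rfl fun n _ => Finset.sum_congr rfl fun m _ => by ring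
      _ = _ := by simp only [Finset.sum_sub_distrib, Finset.sum_add_distrib]
  have hF : ∑ n, ∑ m, expval ψB (B n) * expval ψB (B m)
        * (expval ψA (A n * A m) - expval ψA (A n) * expval ψA (A m))
      = T2 - T4 := by
    rw [hT2, hT4]
    calc ∑ n, ∑ m, expval ψB (B n) * expval ψB (B m)
          * (expval ψA (A n * A m) - expval ψA (A n) * expval ψA (A m))
        = ∑ n, ∑ m, (expval ψA (A n * A m) * (expval ψB (B n) * expval ψB (B m))
            - expval ψA (A n) * expval ψA (A m) * (expval ψB (B n) * expval ψB (B m))) := by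
          exact Finset.sum_congr rfl fun n _ => Finset.sum_congr rfl fun m _ => by ring
      _ = _ := by simp only [Finset.sum_sub_distrib]
  have hU1 : (∑ n, ∑ m, expval ψA (A m * A n) * expval ψB (B m * B n)) = T1 := by
    rw [hT1]; exact Finset.sum_comm
  have hU2 : (∑ n, ∑ m, expval ψA (A n) * expval ψA (A m) * expval ψB (B m * B n)) = T3 := by
    rw [hT3]
    calc (∑ n, ∑ m, expval ψA (A n) * expval ψA (A m) * expval ψB (B m * B n))
        = ∑ n, ∑ m, expval ψA (A m) * expval ψA (A n) * expval ψB (B n * B m) :=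
          Finset.sum_comm
      _ = _ := Finset.sum_congr rfl fun n _ => Finset.sum_congr rfl fun m _ => by ring
  have hKd2 : ∑ n, ∑ m,
        (-(expval ψA (A m * A n) * expval ψB (B m * B n))
          + expval ψA (A n) * expval ψA (A m) * expval ψB (B m * B n)
          + expval ψA (A m) * expval ψA (A n) * expval ψB (B n * B m)
          - expval ψA (A n * A m) * expval ψB (B n * B m))
      = -T1 + T3 + T3 - T1 := by
    calc ∑ n, ∑ m,
          (-(expval ψA (A m * A n) * expval ψB (B m * B n))
            + expval ψA (A n) * expval ψA (A m) * expval ψB (B m * B n)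
            + expval ψA (A m) * expval ψA (A n) * expval ψB (B n * B m)
            - expval ψA (A n * A m) * expval ψB (B n * B m))
        = ∑ n, ∑ m, (-(expval ψA (A m * A n) * expval ψB (B m * B n))
            + expval ψA (A n) * expval ψA (A m) * expval ψB (B m * B n)
            + expval ψA (A n) * expval ψA (A m) * expval ψB (B n * B m)
            - expval ψA (A n * A m) * expval ψB (B n * B m)) :=
          Finset.sum_congr rfl fun n _ => Finset.sum_congr rfl fun m _ => by ring
      _ = (-(∑ n, ∑ m, expval ψA (A m * A n) * expval ψB (B m * B n))
            + (∑ n, ∑ m, expval ψA (A n) * expval ψA (A m) * expval ψB (B m * B n))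
            + (∑ n, ∑ m, expval ψA (A n) * expval ψA (A m) * expval ψB (B n * B m))
            - ∑ n, ∑ m, expval ψA (A n * A m) * expval ψB (B n * B m)) := by
          simp only [Finset.sum_sub_distrib, Finset.sum_add_distrib,
            Finset.sum_neg_distrib]
      _ = -T1 + T3 + T3 - T1 := by
          rw [hU1, hU2, ← hT1, ← hT3]
  rw [hq, hF, hKd2]
  push_cast
  ring
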